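/- If π ∈ B(2n+1), i.e. π is an incomplete matching of [2n+1] in which n+1 is a singleton and each k ∈ {1,...,n} is paired with some element of {n+2,...,2n+1}, then the total crossing number satisfies Cr(π) ≥ n(n+1)/2. -/

import Mathlib

open scoped Classical

noncomputable def lo (V : Finset ℕ) : ℕ := WithTop.untopD 0 V.min
noncomputable def hi (V : Finset ℕ) : ℕ := WithBot.unbotD 0 V.max

/-- `π` is an incomplete matching of `[n] = {1,…,n}`. -/
def IsIM (n : ℕ) (π : Finset (Finset ℕ)) : Prop :=
  (∀ B ∈ π, B.card = 1 ∨ B.card = 2) ∧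
  (∀ B ∈ π, ∀ C ∈ π, B ≠ C → Disjoint B C) ∧
  π.biUnion id = Finset.Icc 1 n

noncomputable def pairsOf (π : Finset (Finset ℕ)) : Finset (Finset ℕ) :=
  π.filter (fun B => B.card = 2)

noncomputable def singsOf (π : Finset (Finset ℕ)) : Finset ℕ :=
  (π.filter (fun B => B.card = 1)).biUnion id

/-- The total crossing number of an incomplete matching:
`Cr(π) = Σ_{{i,j}∈p(π)} |{singletons k : i<k<j}| + 2·|{(U,V): V<U nested}|
  + |{({i,j},{k,l}) : i<k<j<l}|`. -/
noncomputable def Cr (π : Finset (Finset ℕ)) : ℕ :=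
  (∑ V ∈ pairsOf π, ((singsOf π).filter (fun k => lo V < k ∧ k < hi V)).card)
    + 2 * (((pairsOf π) ×ˢ (pairsOf π)).filter
        (fun q => lo q.2 < lo q.1 ∧ hi q.1 < hi q.2)).card
    + (((pairsOf π) ×ˢ (pairsOf π)).filter
        (fun q => lo q.1 < lo q.2 ∧ lo q.2 < hi q.1 ∧ hi q.1 < hi q.2)).card

lemma lo_eq_min' {V : Finset ℕ} (h : V.Nonempty) : lo V = V.min' h := by
  rw [lo, ← Finset.coe_min' h]; rfl

lemma hi_eq_max' {V : Finset ℕ} (h : V.Nonempty) : hi V = V.max' h := by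
  rw [hi, ← Finset.coe_max' h]; rfl

lemma lo_mem {V : Finset ℕ} (h : V.Nonempty) : lo V ∈ V := by
  rw [lo_eq_min' h]; exact V.min'_mem h

lemma hi_mem {V : Finset ℕ} (h : V.Nonempty) : hi V ∈ V := by
  rw [hi_eq_max' h]; exact V.max'_mem h

lemma lo_le {V : Finset ℕ} {x : ℕ} (hx : x ∈ V) : lo V ≤ x := by
  rw [lo_eq_min' ⟨x, hx⟩]; exact Finset.min'_le V x hx

lemma le_hi {V : Finset ℕ} {x : ℕ} (hx : x ∈ V) : x ≤ hi V := by
  rw [hi_eq_max' ⟨x, hx⟩]; exact Finset.le_max' V x hx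

lemma lo_pair {a b : ℕ} (h : a < b) : lo {a, b} = a := by
  have h1 := lo_mem (V := {a,b}) ⟨a, by simp⟩
  have h2 := lo_le (V := {a,b}) (x := a) (by simp)
  simp at h1; omega

lemma hi_pair {a b : ℕ} (h : a < b) : hi {a, b} = b := by
  have h1 := hi_mem (V := {a,b}) ⟨a, by simp⟩
  have h2 := le_hi (V := {a,b}) (x := b) (by simp)
  simp at h1; omega

/-- If `π ∈ B(2n+1)`, i.e. `π` is an incomplete matching of `[2n+1]` in which `n+1` is a
singleton and each `k ∈ {1,…,n}` is paired with some element of `{n+2,…,2n+1}`, then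
`Cr(π) ≥ n(n+1)/2`. -/
theorem crossing_bound_B (n : ℕ) (π : Finset (Finset ℕ))
    (hπ : IsIM (2 * n + 1) π)
    (hsing : ({n + 1} : Finset ℕ) ∈ π)
    (hpair : ∀ k ∈ Finset.Icc 1 n, ∃ j ∈ Finset.Icc (n + 2) (2 * n + 1),
      ({k, j} : Finset ℕ) ∈ π) :
    n * (n + 1) / 2 ≤ Cr π := by
  classical
  obtain ⟨hcard, hdisj, hcover⟩ := hπ
  have hmem : ∀ B ∈ π, ∀ x ∈ B, x ∈ Finset.Icc 1 (2*n+1) := by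
    intro B hB x hx
    rw [← hcover]; exact Finset.mem_biUnion.mpr ⟨B, hB, hx⟩
  have hpair' : ∀ k : ℕ, ∃ j : ℕ, k ∈ Finset.Icc 1 n →
      j ∈ Finset.Icc (n+2) (2*n+1) ∧ ({k,j} : Finset ℕ) ∈ π := by
    intro k
    by_cases hk : k ∈ Finset.Icc 1 n
    · obtain ⟨j, hj1, hj2⟩ := hpair k hk
      exact ⟨j, fun _ => ⟨hj1, hj2⟩⟩
    · exact ⟨0, fun h => absurd h hk⟩
  choose f hf using hpair'
  have hfk : ∀ k ∈ Finset.Icc 1 n, f k ∈ Finset.Icc (n+2) (2*n+1) := fun k hk => (hf k hk).1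
  have hfπ : ∀ k ∈ Finset.Icc 1 n, ({k, f k} : Finset ℕ) ∈ π := fun k hk => (hf k hk).2
  have hlt : ∀ k ∈ Finset.Icc 1 n, k < f k := by
    intro k hk
    have h1 := hfk k hk
    rw [Finset.mem_Icc] at h1 hk; omega
  have hcard2 : ∀ k ∈ Finset.Icc 1 n, ({k, f k} : Finset ℕ).card = 2 := by
    intro k hk
    rw [Finset.card_insert_of_notMem (by simp [(hlt k hk).ne]), Finset.card_singleton]
  have hfinj : Set.InjOn f (Finset.Icc 1 n) := by
    intro a ha b hb hab
    by_contra hne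
    have hneq : ({a, f a} : Finset ℕ) ≠ {b, f b} := by
      intro he
      have h1 : a ∈ ({b, f b} : Finset ℕ) := by rw [← he]; simp
      simp only [Finset.mem_insert, Finset.mem_singleton] at h1
      rcases h1 with h | h
      · exact hne h
      · have h2 := hfk b hb
        simp only [Finset.mem_coe, Finset.mem_Icc] at ha
        rw [Finset.mem_Icc] at h2; omega
    have hd := hdisj _ (hfπ a ha) _ (hfπ b hb) hneq
    exact Finset.disjoint_left.mp hd (by simp [hab] : f b ∈ ({a, f a} : Finset ℕ))
      (by simp : f b ∈ ({b, f b} : Finset ℕ))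
  have himg : (Finset.Icc 1 n).image f = Finset.Icc (n+2) (2*n+1) := by
    apply Finset.eq_of_subset_of_card_le
    · intro x hx
      rw [Finset.mem_image] at hx
      obtain ⟨k, hk, rfl⟩ := hx
      exact hfk k hk
    · rw [Finset.card_image_of_injOn hfinj, Nat.card_Icc, Nat.card_Icc]; omega
  have hstruct : ∀ V ∈ pairsOf π, ∃ k ∈ Finset.Icc 1 n, V = {k, f k} := by
    intro V hV
    rw [pairsOf, Finset.mem_filter] at hV
    obtain ⟨hVπ, hV2⟩ := hV
    have hVne : V.Nonempty := by rw [← Finset.card_pos, hV2]; norm_num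
    obtain ⟨x, hx⟩ := hVne
    have hx' := hmem V hVπ x hx
    rw [Finset.mem_Icc] at hx'
    by_cases hxle : x ≤ n
    · have hxI : x ∈ Finset.Icc 1 n := by rw [Finset.mem_Icc]; omega
      refine ⟨x, hxI, ?_⟩
      by_contra hne
      have hd := hdisj _ hVπ _ (hfπ x hxI) hne
      exact Finset.disjoint_left.mp hd hx (by simp)
    · have hxne : x ≠ n + 1 := by
        intro h
        have hd := hdisj _ hVπ _ hsing (by
          intro he; rw [he] at hV2; simp at hV2)
        exact Finset.disjoint_left.mp hd hx (by simp [h])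
      have hxI : x ∈ Finset.Icc (n+2) (2*n+1) := by rw [Finset.mem_Icc]; omega
      rw [← himg, Finset.mem_image] at hxI
      obtain ⟨k, hk, hfkx⟩ := hxI
      refine ⟨k, hk, ?_⟩
      by_contra hne
      have hd := hdisj _ hVπ _ (hfπ k hk) hne
      exact Finset.disjoint_left.mp hd hx (by rw [← hfkx]; simp)
  have hloV : ∀ V ∈ pairsOf π, (1 ≤ lo V ∧ lo V ≤ n) ∧ (n+2 ≤ hi V ∧ hi V ≤ 2*n+1) := by
    intro V hV
    obtain ⟨k, hk, rfl⟩ := hstruct V hV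
    have h1 := hfk k hk
    rw [Finset.mem_Icc] at h1 hk
    rw [lo_pair (hlt k ?_), hi_pair (hlt k ?_)]
    · exact ⟨hk, h1⟩
    all_goals rw [Finset.mem_Icc]; omega
  have hPsubπ : pairsOf π ⊆ π := Finset.filter_subset _ _
  have hPcard2 : ∀ V ∈ pairsOf π, V.card = 2 := by
    intro V hV; rw [pairsOf, Finset.mem_filter] at hV; exact hV.2
  have hPne : ∀ V ∈ pairsOf π, V.Nonempty := by
    intro V hV
    rw [← Finset.card_pos, hPcard2 V hV]; omega
  have hloinj : ∀ U ∈ pairsOf π, ∀ V ∈ pairsOf π, U ≠ V → lo U ≠ lo V := by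
    intro U hU V hV hne he
    have hd := hdisj _ (hPsubπ hU) _ (hPsubπ hV) hne
    have h1 := lo_mem (hPne U hU)
    rw [he] at h1
    exact Finset.disjoint_left.mp hd h1 (lo_mem (hPne V hV))
  have hhiinj : ∀ U ∈ pairsOf π, ∀ V ∈ pairsOf π, U ≠ V → hi U ≠ hi V := by
    intro U hU V hV hne he
    have hd := hdisj _ (hPsubπ hU) _ (hPsubπ hV) hne
    have h1 := hi_mem (hPne U hU)
    rw [he] at h1
    exact Finset.disjoint_left.mp hd h1 (hi_mem (hPne V hV))
  -- cardinality of pairsOf π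
  have hPeq : pairsOf π = (Finset.Icc 1 n).image (fun k => ({k, f k} : Finset ℕ)) := by
    apply Finset.Subset.antisymm
    · intro V hV
      obtain ⟨k, hk, rfl⟩ := hstruct V hV
      exact Finset.mem_image_of_mem _ hk
    · intro V hV
      rw [Finset.mem_image] at hV
      obtain ⟨k, hk, rfl⟩ := hV
      rw [pairsOf, Finset.mem_filter]
      exact ⟨hfπ k hk, hcard2 k hk⟩
  have hinj2 : Set.InjOn (fun k => ({k, f k} : Finset ℕ)) (Finset.Icc 1 n) := by
    intro a ha b hb hab
    have hab' : ({a, f a} : Finset ℕ) = {b, f b} := hab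
    have h1 : a ∈ ({b, f b} : Finset ℕ) := by
      rw [← hab']; simp
    simp only [Finset.mem_insert, Finset.mem_singleton] at h1
    rcases h1 with h | h
    · exact h
    · have h2 := hfk b hb
      simp only [Finset.mem_coe, Finset.mem_Icc] at ha
      rw [Finset.mem_Icc] at h2; omega
  have hPcard : (pairsOf π).card = n := by
    rw [hPeq, Finset.card_image_of_injOn hinj2, Nat.card_Icc]; omega
  -- singletons
  have hsings : singsOf π = {n+1} := by
    rw [singsOf]
    have hfil : π.filter (fun B => B.card = 1) = {({n+1} : Finset ℕ)} := by
      apply Finset.Subset.antisymm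
      · intro B hB
        rw [Finset.mem_filter] at hB
        obtain ⟨hBπ, hB1⟩ := hB
        obtain ⟨x, rfl⟩ := Finset.card_eq_one.mp hB1
        have hx := hmem _ hBπ x (by simp)
        rw [Finset.mem_Icc] at hx
        simp only [Finset.mem_singleton]
        by_contra hne
        have hxne : x ≠ n+1 := by
          intro h; exact hne (by rw [h])
        have hxP : ∃ k ∈ Finset.Icc 1 n, x ∈ ({k, f k} : Finset ℕ) := by
          by_cases hxle : x ≤ n
          · exact ⟨x, by rw [Finset.mem_Icc]; omega, by simp⟩
          · have hxI : x ∈ Finset.Icc (n+2) (2*n+1) := by rw [Finset.mem_Icc]; omega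
            rw [← himg, Finset.mem_image] at hxI
            obtain ⟨k, hk, hfkx⟩ := hxI
            exact ⟨k, hk, by rw [← hfkx]; simp⟩
        obtain ⟨k, hk, hxk⟩ := hxP
        have hBne : ({x} : Finset ℕ) ≠ {k, f k} := by
          intro he
          have h2 := hcard2 k hk
          rw [← he] at h2; simp at h2
        have hd := hdisj _ hBπ _ (hfπ k hk) hBne
        exact Finset.disjoint_left.mp hd (by simp) hxk
      · intro B hB
        simp only [Finset.mem_singleton] at hB
        subst hB
        rw [Finset.mem_filter]
        exact ⟨hsing, by simp⟩
    rw [hfil, Finset.singleton_biUnion]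
    rfl
  -- the singleton sum equals n
  have hsum : (∑ V ∈ pairsOf π, ((singsOf π).filter (fun k => lo V < k ∧ k < hi V)).card) = n := by
    have hone : ∀ V ∈ pairsOf π,
        ((singsOf π).filter (fun k => lo V < k ∧ k < hi V)).card = 1 := by
      intro V hV
      obtain ⟨⟨_, hl⟩, ⟨hh, _⟩⟩ := hloV V hV
      rw [hsings, Finset.filter_singleton, if_pos (by omega)]
      simp
    rw [Finset.sum_congr rfl hone, Finset.sum_const, smul_eq_mul, mul_one, hPcard]
  rw [Cr, hsum]
  set N1 := ((pairsOf π) ×ˢ (pairsOf π)).filter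
      (fun q => lo q.2 < lo q.1 ∧ hi q.1 < hi q.2) with hN1
  set C1 := ((pairsOf π) ×ˢ (pairsOf π)).filter
      (fun q => lo q.1 < lo q.2 ∧ lo q.2 < hi q.1 ∧ hi q.1 < hi q.2) with hC1
  set N2 := ((pairsOf π) ×ˢ (pairsOf π)).filter
      (fun q => lo q.1 < lo q.2 ∧ hi q.2 < hi q.1) with hN2
  set C2 := ((pairsOf π) ×ˢ (pairsOf π)).filter
      (fun q => lo q.2 < lo q.1 ∧ lo q.1 < hi q.2 ∧ hi q.2 < hi q.1) with hC2
  have hdecomp : (pairsOf π).offDiag = N1 ∪ N2 ∪ C1 ∪ C2 := by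
    ext q
    simp only [Finset.mem_offDiag, Finset.mem_union, hN1, hN2, hC1, hC2,
      Finset.mem_filter, Finset.mem_product]
    constructor
    · rintro ⟨h1, h2, hne⟩
      obtain ⟨⟨hl1a, hl1b⟩, ⟨hh1a, hh1b⟩⟩ := hloV _ h1
      obtain ⟨⟨hl2a, hl2b⟩, ⟨hh2a, hh2b⟩⟩ := hloV _ h2
      have hlo := hloinj _ h1 _ h2 hne
      have hhi := hhiinj _ h1 _ h2 hne
      rcases lt_or_gt_of_ne hlo with h | h <;> rcases lt_or_gt_of_ne hhi with h' | h'
      · exact Or.inl (Or.inr ⟨⟨h1, h2⟩, h, by omega, h'⟩)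
      · exact Or.inl (Or.inl (Or.inr ⟨⟨h1, h2⟩, h, h'⟩))
      · exact Or.inl (Or.inl (Or.inl ⟨⟨h1, h2⟩, h, h'⟩))
      · exact Or.inr ⟨⟨h1, h2⟩, h, by omega, h'⟩
    · rintro (((⟨⟨h1, h2⟩, hc⟩ | ⟨⟨h1, h2⟩, hc⟩) | ⟨⟨h1, h2⟩, hc⟩) | ⟨⟨h1, h2⟩, hc⟩) <;>
        exact ⟨h1, h2, fun he => by rw [he] at hc; omega⟩
  have hdNN : Disjoint N1 N2 := by
    rw [Finset.disjoint_left]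
    intro q hq hq'
    rw [hN1, Finset.mem_filter] at hq
    rw [hN2, Finset.mem_filter] at hq'
    obtain ⟨-, hc⟩ := hq; obtain ⟨-, hc'⟩ := hq'; omega
  have hdN1C1 : Disjoint N1 C1 := by
    rw [Finset.disjoint_left]
    intro q hq hq'
    rw [hN1, Finset.mem_filter] at hq
    rw [hC1, Finset.mem_filter] at hq'
    obtain ⟨-, hc⟩ := hq; obtain ⟨-, hc'⟩ := hq'; omega
  have hdN2C1 : Disjoint N2 C1 := by
    rw [Finset.disjoint_left]
    intro q hq hq'
    rw [hN2, Finset.mem_filter] at hq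
    rw [hC1, Finset.mem_filter] at hq'
    obtain ⟨-, hc⟩ := hq; obtain ⟨-, hc'⟩ := hq'; omega
  have hdN1C2 : Disjoint N1 C2 := by
    rw [Finset.disjoint_left]
    intro q hq hq'
    rw [hN1, Finset.mem_filter] at hq
    rw [hC2, Finset.mem_filter] at hq'
    obtain ⟨-, hc⟩ := hq; obtain ⟨-, hc'⟩ := hq'; omega
  have hdN2C2 : Disjoint N2 C2 := by
    rw [Finset.disjoint_left]
    intro q hq hq'
    rw [hN2, Finset.mem_filter] at hq
    rw [hC2, Finset.mem_filter] at hq'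
    obtain ⟨-, hc⟩ := hq; obtain ⟨-, hc'⟩ := hq'; omega
  have hdC1C2 : Disjoint C1 C2 := by
    rw [Finset.disjoint_left]
    intro q hq hq'
    rw [hC1, Finset.mem_filter] at hq
    rw [hC2, Finset.mem_filter] at hq'
    obtain ⟨-, hc⟩ := hq; obtain ⟨-, hc'⟩ := hq'; omega
  have hcardU : (pairsOf π).offDiag.card = N1.card + N2.card + C1.card + C2.card := by
    rw [hdecomp, Finset.card_union_of_disjoint (by
        rw [Finset.disjoint_union_left, Finset.disjoint_union_left]
        exact ⟨⟨hdN1C2, hdN2C2⟩, hdC1C2⟩),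
      Finset.card_union_of_disjoint (by
        rw [Finset.disjoint_union_left]
        exact ⟨hdN1C1, hdN2C1⟩),
      Finset.card_union_of_disjoint hdNN]
  have hswapN : N2 = N1.image Prod.swap := by
    ext q
    simp only [hN1, hN2, Finset.mem_image, Finset.mem_filter, Finset.mem_product]
    constructor
    · intro h
      exact ⟨q.swap, ⟨⟨h.1.2, h.1.1⟩, h.2⟩, Prod.swap_swap q⟩
    · rintro ⟨p, hp, rfl⟩
      exact ⟨⟨hp.1.2, hp.1.1⟩, hp.2⟩
  have hswapC : C2 = C1.image Prod.swap := by
    ext q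
    simp only [hC1, hC2, Finset.mem_image, Finset.mem_filter, Finset.mem_product]
    constructor
    · intro h
      exact ⟨q.swap, ⟨⟨h.1.2, h.1.1⟩, h.2⟩, Prod.swap_swap q⟩
    · rintro ⟨p, hp, rfl⟩
      exact ⟨⟨hp.1.2, hp.1.1⟩, hp.2⟩
  have hN2card : N2.card = N1.card := by
    rw [hswapN, Finset.card_image_of_injective _ Prod.swap_injective]
  have hC2card : C2.card = C1.card := by
    rw [hswapC, Finset.card_image_of_injective _ Prod.swap_injective]
  have hoff : (pairsOf π).offDiag.card = n * n - n := by
    rw [Finset.offDiag_card, hPcard]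
  have hmul : n * (n + 1) = n * n + n := by ring
  omega
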